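/- In any turn-based game structure satisfying formulas (1)–(4) of the reduction (which enforce that each grid cell is a four-state gadget whose entry state is a □-state labelled m and exactly one of v₁, v₂, whose two middle states are ○-states labelled m where Player 1 can choose between colours α and β, and whose exit states are ○-states labelled m with neither α nor β that are exactly the states having successors labelled c, v₁ or v₂), the additional formula (5), AG[(m ∧ □) ⇒ [2](⟨∅⟩X³(c ∨ v₁) ∨ ⟨∅⟩X³(c ∨ v₂))], forces every cell gadget to have a single exit state: the α-middle state and the β-middle state of each cell lead to the same exit state. -/

import Mathlib

/-!
# ATL with strategy contexts and memoryless strategies (ATL_sc^0)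

Players and atomic propositions are coded as natural numbers.
-/

/-- A concurrent game structure: states labelled with atomic propositions (coded as
naturals), players coded as naturals, and a transition function assigning to each state
and each tuple of moves (one move per player) a successor state. -/
structure CGS : Type 1 where
  State : Type
  Move : Type
  move_nonempty : Nonempty Move
  label : State → ℕ → Prop
  trans : State → (ℕ → Move) → State

/-- Player `p` controls state `s`: the successor from `s` only depends on `p`'s move. -/
def Controls (G : CGS) (p : ℕ) (s : G.State) : Prop :=
  ∀ mv mv' : ℕ → G.Move, mv p = mv' p → G.trans s mv = G.trans s mv'

/-- A game structure is turn-based if every state is controlled by a single player. -/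
def TurnBased (G : CGS) : Prop := ∀ s : G.State, ∃ p : ℕ, Controls G p s

/-- A (memoryless) strategy context: a partial assignment of memoryless strategies
(functions from states to moves) to players. -/
def Ctx (G : CGS) : Type := ℕ → Option (G.State → G.Move)

/-- The empty strategy context. -/
def emptyCtx (G : CGS) : Ctx G := fun _ => none

/-- `π` is an outcome from state `s` compatible with the memoryless context `ctx`:
at each step, every player to whom `ctx` assigns a strategy plays according to it. -/
def IsOutcome (G : CGS) (ctx : Ctx G) (s : G.State) (π : ℕ → G.State) : Prop :=
  π 0 = s ∧ ∀ i : ℕ, ∃ mv : ℕ → G.Move,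
    (∀ p σ, ctx p = some σ → mv p = σ (π i)) ∧ π (i + 1) = G.trans (π i) mv

/-- Formulas of ATL_sc^0 (with LTL path modalities `X` and `U`); coalitions are
finite lists of players. -/
inductive Formula : Type where
  | atom : ℕ → Formula
  | neg : Formula → Formula
  | conj : Formula → Formula → Formula
  | next : Formula → Formula
  | untl : Formula → Formula → Formula
  | strat : List ℕ → Formula → Formula

/-- Satisfaction of a formula on a path, under a memoryless strategy context.
`strat A φ` (the quantifier `⟨A⟩φ`) assigns new memoryless strategies to the players
of `A`, keeps the strategies of the other players from the current context, and
requires `φ` on all outcomes compatible with the resulting context. -/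
def sat (G : CGS) : Formula → Ctx G → (ℕ → G.State) → Prop
  | .atom p, _, π => G.label (π 0) p
  | .neg φ, ctx, π => ¬ sat G φ ctx π
  | .conj φ ψ, ctx, π => sat G φ ctx π ∧ sat G ψ ctx π
  | .next φ, ctx, π => sat G φ ctx (fun n => π (n + 1))
  | .untl φ ψ, ctx, π => ∃ j : ℕ, sat G ψ ctx (fun n => π (n + j)) ∧
      ∀ k < j, sat G φ ctx (fun n => π (n + k))
  | .strat A φ, ctx, π => ∃ ctx' : Ctx G,
      (∀ p, p ∉ A → ctx' p = ctx p) ∧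
      (∀ p, p ∈ A → ∃ σ, ctx' p = some σ) ∧
      ∀ π' : ℕ → G.State, IsOutcome G ctx' (π 0) π' → sat G φ ctx' π'

/-- A state satisfies a formula (under a given context) if the formula holds on all
outcomes from that state compatible with the context. -/
def StateSatCtx (G : CGS) (ctx : Ctx G) (s : G.State) (φ : Formula) : Prop :=
  ∀ π : ℕ → G.State, IsOutcome G ctx s π → sat G φ ctx π

/-- A state satisfies a formula under the empty strategy context. -/
def StateSat (G : CGS) (s : G.State) (φ : Formula) : Prop :=
  StateSatCtx G (emptyCtx G) s φ

/-- Satisfiability of an ATL_sc^0 formula in a turn-based game structure. -/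
def SatTB (φ : Formula) : Prop :=
  ∃ G : CGS, TurnBased G ∧ ∃ s : G.State, StateSat G s φ

/-- An explicit injective encoding of formulas as natural numbers. -/
def encodeF : Formula → ℕ
  | .atom n => Nat.pair 0 n
  | .neg φ => Nat.pair 1 (encodeF φ)
  | .conj φ ψ => Nat.pair 2 (Nat.pair (encodeF φ) (encodeF ψ))
  | .next φ => Nat.pair 3 (encodeF φ)
  | .untl φ ψ => Nat.pair 4 (Nat.pair (encodeF φ) (encodeF ψ))
  | .strat A φ => Nat.pair 5 (Nat.pair (Encodable.encode A) (encodeF φ))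


namespace Formula

/-- Disjunction. -/
def fOr (φ ψ : Formula) : Formula := neg (conj (neg φ) (neg ψ))
/-- Implication. -/
def fImp (φ ψ : Formula) : Formula := fOr (neg φ) ψ
/-- Bi-implication. -/
def fIff (φ ψ : Formula) : Formula := conj (fImp φ ψ) (fImp ψ φ)
/-- True. -/
def top : Formula := fOr (atom 0) (neg (atom 0))
/-- False. -/
def bot : Formula := neg top
/-- Eventually (`F`). -/
def fut (φ : Formula) : Formula := untl top φ
/-- Globally (`G`). -/
def glob (φ : Formula) : Formula := neg (fut (neg φ))
/-- Weak until (`W`): `G φ ∨ φ U ψ`. -/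
def wuntl (φ ψ : Formula) : Formula := fOr (glob φ) (untl φ ψ)
/-- Finite disjunction. -/
def bigOr (l : List Formula) : Formula := l.foldr fOr bot
/-- Finite conjunction. -/
def bigAnd (l : List Formula) : Formula := l.foldr conj top
/-- Universal path quantification `A`, encoded as `⟨∅⟩`. -/
def Aq (φ : Formula) : Formula := strat [] φ
/-- Existential path quantification `E`. -/
def Eq (φ : Formula) : Formula := neg (Aq (neg φ))
/-- The strategy quantifier `⟨p⟩` for a single player `p`. -/
def D (p : ℕ) (φ : Formula) : Formula := strat [p] φ
/-- The dual quantifier `[p]` over memoryless strategies of player `p`. -/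
def B (p : ℕ) (φ : Formula) : Formula := neg (D p (neg φ))
/-- Two nested next modalities. -/
def X2 (φ : Formula) : Formula := next (next φ)
/-- Three nested next modalities. -/
def X3 (φ : Formula) : Formula := next (X2 φ)
/-- Four nested next modalities. -/
def X4 (φ : Formula) : Formula := next (X3 φ)

end Formula

open Formula

/-! Coding of the atomic propositions `{m, c, v₁, v₂, α, β, □, ○} ∪ T`:
`m ↦ 0`, `c ↦ 1`, `v₁ ↦ 2`, `v₂ ↦ 3`, `α ↦ 4`, `β ↦ 5`, `□ ↦ 6`, `○ ↦ 7`,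
and tile `t ↦ 8 + t`. -/

def pm : Formula := Formula.atom 0
def pc : Formula := Formula.atom 1
def pv1 : Formula := Formula.atom 2
def pv2 : Formula := Formula.atom 3
def pal : Formula := Formula.atom 4
def pbe : Formula := Formula.atom 5
def psq : Formula := Formula.atom 6
def pci : Formula := Formula.atom 7
def ptile (t : ℕ) : Formula := Formula.atom (8 + t)

/-- A tile system: tiles are `0, …, numTiles - 1`, with horizontal and vertical
matching relations given as finite lists of pairs. -/
structure TileSystem : Type where
  numTiles : ℕ
  H : List (ℕ × ℕ)
  V : List (ℕ × ℕ)

/-- The tile system admits a tiling of the quadrant ℕ×ℕ. -/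
def TilesQuadrant (ts : TileSystem) : Prop :=
  ∃ τ : ℕ → ℕ → ℕ, (∀ i j, τ i j < ts.numTiles) ∧
    (∀ i j, (τ i j, τ (i + 1) j) ∈ ts.H) ∧
    (∀ i j, (τ i j, τ i (j + 1)) ∈ ts.V)

/-- An explicit encoding of tile systems as natural numbers. -/
def encodeTS (ts : TileSystem) : ℕ := Encodable.encode (ts.numTiles, ts.H, ts.V)

/-- The list of tiles of a tile system. -/
def tilesOf (ts : TileSystem) : List ℕ := List.range ts.numTiles

/-- The atomic propositions `AP' = {m, c} ∪ T`. -/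
def APprime (ts : TileSystem) : List ℕ := 0 :: 1 :: (tilesOf ts).map (fun t => 8 + t)

/-- The atomic propositions `AP = AP' ∪ {v₁, v₂, α, β, □, ○}`. -/
def APall (ts : TileSystem) : List ℕ := APprime ts ++ [2, 3, 4, 5, 6, 7]

/-- Formula (1): labelling discipline (each state has exactly one proposition of `AP'`),
`A(m W c)`, the shape of choice and tile states, and turn-basedness via
`□ ⇔ ¬○` and `EX p ⇔ ⟨i⟩X p`. -/
def phi1 (ts : TileSystem) : Formula :=
  bigAnd [
    Aq (glob (bigOr ((APprime ts).map fun p =>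
      conj (atom p) (bigAnd (((APprime ts).filter (· ≠ p)).map fun q => neg (atom q)))))),
    Aq (wuntl pm pc),
    Aq (glob (fImp pc (bigAnd [psq,
      bigAnd ((tilesOf ts).map fun t => D 1 (next (ptile t))),
      Aq (next (bigOr ((tilesOf ts).map fun t => Aq (glob (ptile t)))))]))),
    Aq (glob (bigAnd [
      fIff psq (neg pci),
      fImp psq (bigAnd ((APall ts).map fun p =>
        fIff (Eq (next (atom p))) (D 1 (next (atom p))))),
      fImp pci (bigAnd ((APall ts).map fun p =>
        fIff (Eq (next (atom p))) (D 2 (next (atom p)))))]))]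

/-- Formula (2): the four-state cell gadgets: entry `□`-states labelled `m` and
exactly one of `v₁, v₂`, middle `○`-states coloured `α` or `β` by Player 1,
exit `○`-states with neither colour. -/
def phi2 (_ts : TileSystem) : Formula :=
  bigAnd [
    Aq (glob (fImp pm (fOr (bigAnd [psq, neg pal, neg pbe])
      (conj pci (neg (conj pal pbe)))))),
    Aq (glob (conj (fImp (conj pm psq) (fIff pv1 (neg pv2)))
      (fImp (fOr pv1 pv2) (conj pm psq)))),
    Aq (glob (fImp (conj pm psq) (bigAnd [
      Aq (next (bigAnd [pm, pci, fOr pal pbe,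
        Aq (next (bigAnd [pm, pci, neg pal, neg pbe]))])),
      D 1 (next pal),
      D 1 (next pbe)])))]

/-- Formula (3): constraints on transitions leaving a cell. -/
def phi3 (_ts : TileSystem) : Formula :=
  bigAnd [
    Aq (glob (fImp (bigOr [Eq (next pc), Eq (next pv1), Eq (next pv2)])
      (bigAnd [pm, pci, neg pal, neg pbe]))),
    Aq (glob (fImp (bigAnd [pm, pci, neg pal, neg pbe])
      (bigAnd [Eq (next pc), Eq (next pv1), Eq (next pv2),
        Aq (next (bigOr [pc, pv1, pv2]))])))]

/-- Formula (4): the tiling constraints, under a memoryless strategy of Player 1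
choosing a tile for each cell (distances adapted to the four-state cell gadget). -/
def phi4 (ts : TileSystem) : Formula :=
  D 1 (glob (bigAnd [
    fImp pv1 (bigOr (ts.H.map fun p =>
      conj (D 2 (X4 (ptile p.1))) (D 2 (X3 (conj pv2 (X4 (ptile p.2))))))),
    fImp pv2 (bigOr (ts.H.map fun p =>
      conj (D 2 (X4 (ptile p.1))) (D 2 (X3 (conj pv1 (X4 (ptile p.2))))))),
    fImp pv1 (bigOr (ts.V.map fun p =>
      conj (D 2 (X4 (ptile p.1))) (D 2 (X3 (conj pv1 (X4 (ptile p.2))))))),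
    fImp pv2 (bigOr (ts.V.map fun p =>
      conj (D 2 (X4 (ptile p.1))) (D 2 (X3 (conj pv2 (X4 (ptile p.2)))))))]))

/-- Formula (5): `AG[(m ∧ □) ⇒ [2](⟨∅⟩X³(c ∨ v₁) ∨ ⟨∅⟩X³(c ∨ v₂))]`,
forcing each cell to have a single exit state. -/
def phi5 : Formula :=
  Aq (glob (fImp (conj pm psq)
    (B 2 (fOr (Aq (X3 (fOr pc pv1))) (Aq (X3 (fOr pc pv2)))))))

/-- Formula (6): `AG[(m ∧ □) ⇒ [1]((⟨2⟩X³(v₁ ∧ Xα) ∧ ⟨2⟩X³(v₂ ∧ Xα)) ⇒ [2]⟨∅⟩X³Xα)]`,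
forcing each cell to have exactly two successor cells. -/
def phi6 : Formula :=
  Aq (glob (fImp (conj pm psq)
    (B 1 (fImp (conj (D 2 (X3 (conj pv1 (next pal)))) (D 2 (X3 (conj pv2 (next pal)))))
      (B 2 (Aq (X3 (next pal))))))))

/-- Formula (7): `[1]⟨∅⟩G[(m ∧ □ ∧ v₁) ⇒ ((⟨2⟩X³(v₁ ∧ [2]X³Xα)) ⇒
(⟨2⟩X³(¬v₁ ∧ X³(¬v₁ ∧ Xα))))]` together with its `v₂`-counterpart, forcing the two
successor cells of every cell to share a common successor cell. -/
def phi7 : Formula :=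
  conj
    (B 1 (Aq (glob (fImp (bigAnd [pm, psq, pv1])
      (fImp (D 2 (X3 (conj pv1 (B 2 (X3 (next pal))))))
        (D 2 (X3 (conj (neg pv1) (X3 (conj (neg pv1) (next pal)))))))))))
    (B 1 (Aq (glob (fImp (bigAnd [pm, psq, pv2])
      (fImp (D 2 (X3 (conj pv2 (B 2 (X3 (next pal))))))
        (D 2 (X3 (conj (neg pv2) (X3 (conj (neg pv2) (next pal)))))))))))

/-- The reduction formula `Φ_{T,H,V}`: the conjunction of formulas (1)–(7), together
with the requirement that the initial state be a square state of a cell of the main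
part. -/
def Phi (ts : TileSystem) : Formula :=
  bigAnd [conj pm psq, phi1 ts, phi2 ts, phi3 ts, phi4 ts, phi5, phi6, phi7]

/-- The atomic propositions occurring in a formula. -/
def atomsOf : Formula → List ℕ
  | .atom n => [n]
  | .neg φ => atomsOf φ
  | .conj φ ψ => atomsOf φ ++ atomsOf ψ
  | .next φ => atomsOf φ
  | .untl φ ψ => atomsOf φ ++ atomsOf ψ
  | .strat _ φ => atomsOf φ

/-- The players occurring (in coalitions) in a formula. -/
def playersOf : Formula → List ℕ
  | .atom _ => []
  | .neg φ => playersOf φ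
  | .conj φ ψ => playersOf φ ++ playersOf ψ
  | .next φ => playersOf φ
  | .untl φ ψ => playersOf φ ++ playersOf ψ
  | .strat A φ => A ++ playersOf φ


/-- One-step successor relation of a game structure. -/
def Step (G : CGS) (s s' : G.State) : Prop := ∃ mv : ℕ → G.Move, G.trans s mv = s'

/-- Three-step successor relation (the entry state of a cell gadget reaches the entry
states of its successor cells, and its choice state, in exactly three steps). -/
def Step3 (G : CGS) (s s' : G.State) : Prop :=
  ∃ x y : G.State, Step G s x ∧ Step G x y ∧ Step G y s'

/-- Reachability in a game structure. -/
def Reach (G : CGS) : G.State → G.State → Prop := Relation.ReflTransGen (Step G)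


/-! ### Auxiliary infrastructure for the proof -/

section AuxProof

variable {G : CGS}

/-- A default move. -/
noncomputable def dmvG (G : CGS) : ℕ → G.Move := fun _ => Classical.choice G.move_nonempty

/-- The context assigning strategy `σ` to player `p` and nothing to anyone else. -/
def ctxOf (G : CGS) (p : ℕ) (σ : G.State → G.Move) : Ctx G :=
  fun q => if q = p then some σ else none

/-- A compliant move selector for a context. -/
noncomputable def selOf (G : CGS) (ctx : Ctx G) (u : G.State) : ℕ → G.Move :=
  fun p => (ctx p).elim (dmvG G p) (fun τ => τ u)

lemma selOf_comp (ctx : Ctx G) (u : G.State) :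
    ∀ p τ, ctx p = some τ → selOf G ctx u p = τ u := by
  intro p τ h; simp [selOf, h]

/-- The canonical outcome obtained by always playing compliant default moves. -/
noncomputable def runFrom (G : CGS) (ctx : Ctx G) (s : G.State) : ℕ → G.State
  | 0 => s
  | n + 1 => G.trans (runFrom G ctx s n) (selOf G ctx (runFrom G ctx s n))

lemma runFrom_outcome (ctx : Ctx G) (s : G.State) :
    IsOutcome G ctx s (runFrom G ctx s) :=
  ⟨rfl, fun i => ⟨selOf G ctx (runFrom G ctx s i), selOf_comp ctx _, rfl⟩⟩

/-- Prepending a state to a path. -/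
def consP {G : CGS} (s : G.State) (π : ℕ → G.State) : ℕ → G.State
  | 0 => s
  | n + 1 => π n

lemma cons_outcome {ctx : Ctx G} {s x : G.State} {π : ℕ → G.State} (mv : ℕ → G.Move)
    (hcomp : ∀ p τ, ctx p = some τ → mv p = τ s) (htr : G.trans s mv = x)
    (hπ : IsOutcome G ctx x π) : IsOutcome G ctx s (consP s π) := by
  refine ⟨rfl, fun i => ?_⟩
  cases i with
  | zero => exact ⟨mv, hcomp, (hπ.1.trans htr.symm : π 0 = G.trans s mv)⟩
  | succ n => exact hπ.2 n

lemma empty_comp (mv : ℕ → G.Move) (s : G.State) :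
    ∀ p τ, emptyCtx G p = some τ → mv p = τ s := by
  intro p τ h; simp [emptyCtx] at h

lemma isOutcome_empty_steps {s : G.State} {π : ℕ → G.State}
    (h : IsOutcome G (emptyCtx G) s π) : ∀ i, Step G (π i) (π (i + 1)) :=
  fun i => (h.2 i).imp fun _ hm => hm.2.symm

/-! #### Satisfaction lemmas -/

lemma sat_top (ctx : Ctx G) (π : ℕ → G.State) : sat G Formula.top ctx π :=
  fun h => h.2 h.1

lemma sat_fOr {a b : Formula} {ctx : Ctx G} {π : ℕ → G.State} :
    sat G (fOr a b) ctx π ↔ sat G a ctx π ∨ sat G b ctx π := by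
  simp only [fOr, sat]; tauto

lemma sat_fImp {a b : Formula} {ctx : Ctx G} {π : ℕ → G.State} :
    sat G (fImp a b) ctx π ↔ (sat G a ctx π → sat G b ctx π) := by
  simp only [fImp, fOr, sat]; tauto

lemma sat_fIff {a b : Formula} {ctx : Ctx G} {π : ℕ → G.State} :
    sat G (fIff a b) ctx π ↔ (sat G a ctx π ↔ sat G b ctx π) := by
  simp only [fIff, sat, sat_fImp]; tauto

lemma sat_bigAnd {l : List Formula} {ctx : Ctx G} {π : ℕ → G.State} :
    sat G (bigAnd l) ctx π ↔ ∀ φ ∈ l, sat G φ ctx π := by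
  induction l with
  | nil =>
      constructor
      · intro _ φ h; exact absurd h List.not_mem_nil
      · intro _; exact sat_top ctx π
  | cons a t ih =>
      constructor
      · rintro ⟨ha, ht⟩ φ hφ
        rcases List.mem_cons.mp hφ with rfl | h
        · exact ha
        · exact ih.mp ht φ h
      · intro h
        exact ⟨h a (List.mem_cons_self), ih.mpr fun φ hφ => h φ (List.mem_cons_of_mem a hφ)⟩

lemma sat_bigOr {l : List Formula} {ctx : Ctx G} {π : ℕ → G.State} :
    sat G (bigOr l) ctx π ↔ ∃ φ ∈ l, sat G φ ctx π := by
  induction l with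
  | nil =>
      constructor
      · intro h; exact absurd (sat_top ctx π) h
      · rintro ⟨φ, h, -⟩; exact absurd h List.not_mem_nil
  | cons a t ih =>
      have : sat G (bigOr (a :: t)) ctx π ↔ sat G a ctx π ∨ sat G (bigOr t) ctx π := sat_fOr
      rw [this, ih]
      constructor
      · rintro (h | ⟨φ, hm, h⟩)
        · exact ⟨a, List.mem_cons_self, h⟩
        · exact ⟨φ, List.mem_cons_of_mem a hm, h⟩
      · rintro ⟨φ, hm, h⟩
        rcases List.mem_cons.mp hm with rfl | hm
        · exact Or.inl h
        · exact Or.inr ⟨φ, hm, h⟩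

lemma sat_Aq {φ : Formula} {ctx : Ctx G} {π : ℕ → G.State} :
    sat G (Aq φ) ctx π ↔ ∀ π', IsOutcome G ctx (π 0) π' → sat G φ ctx π' := by
  constructor
  · rintro ⟨ctx', hA, -, h⟩
    have hctx : ctx' = ctx := funext fun p => hA p List.not_mem_nil
    exact hctx ▸ h
  · intro h
    exact ⟨ctx, fun p _ => rfl, fun p hp => absurd hp List.not_mem_nil, h⟩

lemma sat_glob_iff {φ : Formula} {ctx : Ctx G} {π : ℕ → G.State} :
    sat G (glob φ) ctx π ↔ ∀ j, sat G φ ctx (fun n => π (n + j)) := by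
  constructor
  · intro h j
    by_contra hc
    exact h ⟨j, hc, fun k _ => sat_top ctx _⟩
  · rintro h ⟨j, hj, -⟩
    exact hj (h j)

lemma sat_Eq {φ : Formula} {ctx : Ctx G} {π : ℕ → G.State} :
    sat G (Formula.Eq φ) ctx π ↔ ∃ π', IsOutcome G ctx (π 0) π' ∧ sat G φ ctx π' := by
  constructor
  · intro h
    by_contra hc
    push_neg at hc
    exact h (sat_Aq.mpr fun π' ho hs => hc π' ho hs)
  · rintro ⟨π', ho, hs⟩ h
    exact sat_Aq.mp h π' ho hs

lemma sat_D_elim {φ : Formula} {p : ℕ} {π : ℕ → G.State}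
    (h : sat G (D p φ) (emptyCtx G) π) :
    ∃ σ, ∀ π', IsOutcome G (ctxOf G p σ) (π 0) π' → sat G φ (ctxOf G p σ) π' := by
  obtain ⟨ctx', hA, hB, hall⟩ := h
  obtain ⟨σ, hσ⟩ := hB p (List.mem_singleton_self p)
  have hctx : ctx' = ctxOf G p σ := funext fun q => by
    by_cases hq : q = p
    · subst hq; simpa [ctxOf] using hσ
    · have := hA q (by simp [hq])
      simpa [ctxOf, hq, emptyCtx] using this
  exact ⟨σ, hctx ▸ hall⟩

lemma sat_B_elim {φ : Formula} {p : ℕ} {π : ℕ → G.State}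
    (h : sat G (B p φ) (emptyCtx G) π) (σ : G.State → G.Move) :
    ∃ π', IsOutcome G (ctxOf G p σ) (π 0) π' ∧ sat G φ (ctxOf G p σ) π' := by
  by_contra hc
  push_neg at hc
  exact h ⟨ctxOf G p σ,
    fun q hq => by simp only [ctxOf]; rw [if_neg (by simpa using hq)]; rfl,
    fun q hq => ⟨σ, by simp [ctxOf, List.mem_singleton.mp hq]⟩,
    fun π' ho hs => hc π' ho hs⟩

/-! #### Splicing outcomes along reachability -/

lemma splice {s0 s : G.State} (h : Reach G s0 s) {π : ℕ → G.State}
    (hπ : IsOutcome G (emptyCtx G) s π) :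
    ∃ ρ, IsOutcome G (emptyCtx G) s0 ρ ∧ ∃ k, ∀ n, ρ (n + k) = π n := by
  induction h using Relation.ReflTransGen.head_induction_on with
  | refl => exact ⟨π, hπ, 0, fun n => rfl⟩
  | head hstep _ ih =>
      obtain ⟨ρ, hρ, k, hk⟩ := ih
      obtain ⟨mv, hmv⟩ := hstep
      refine ⟨consP _ ρ, cons_outcome mv (empty_comp mv _) hmv hρ, k + 1,
        fun n => hk n⟩

/-- Main transfer lemma: a formula under `AG` holds on every outcome from every
reachable state. -/
lemma AG_transfer {s0 s : G.State} {ψ : Formula}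
    (hsat : StateSat G s0 (Aq (glob ψ))) (hre : Reach G s0 s)
    {π : ℕ → G.State} (hπ : IsOutcome G (emptyCtx G) s π) :
    sat G ψ (emptyCtx G) π := by
  obtain ⟨ρ, hρ, k, hk⟩ := splice hre hπ
  have h1 := hsat ρ hρ
  have h2 := sat_Aq.mp h1 ρ (hρ.1 ▸ hρ)
  have h3 := sat_glob_iff.mp h2 k
  have he : (fun n => ρ (n + k)) = π := funext hk
  rwa [he] at h3


/-! #### Facts extracted from formulas (1)–(3) and (5) -/

section Facts

variable {ts : TileSystem} {s0 : G.State}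

lemma cons_run_outcome {s x : G.State} (hx : Step G s x) :
    IsOutcome G (emptyCtx G) s (consP s (runFrom G (emptyCtx G) x)) := by
  obtain ⟨mv, hmv⟩ := hx
  exact cons_outcome mv (empty_comp mv s) hmv (runFrom_outcome _ x)

/-- From formula (1), first conjunct: a reachable `m`-state is not a `c`-state. -/
lemma fact_m_not_c (h1 : StateSat G s0 (phi1 ts)) {s : G.State} (hre : Reach G s0 s)
    (hm : G.label s 0) : ¬ G.label s 1 := by
  have hA : StateSat G s0 (Aq (glob (bigOr ((APprime ts).map fun p =>
      Formula.conj (.atom p)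
        (bigAnd (((APprime ts).filter (· ≠ p)).map fun q => .neg (.atom q))))))) :=
    fun π hπ => sat_bigAnd.mp (by simpa [phi1] using h1 π hπ) _ (by simp)
  have hs := AG_transfer hA hre (runFrom_outcome (emptyCtx G) s)
  obtain ⟨φ, hφmem, hφ⟩ := sat_bigOr.mp hs
  obtain ⟨p, hpmem, rfl⟩ := List.mem_map.mp hφmem
  obtain ⟨hsp, hall⟩ := hφ
  by_cases hp0 : p = 0
  · subst hp0
    have h1mem : (1 : ℕ) ∈ (APprime ts).filter (· ≠ 0) := by simp [APprime]
    exact sat_bigAnd.mp hall _ (List.mem_map.mpr ⟨1, h1mem, rfl⟩)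
  · exfalso
    have h0mem : (0 : ℕ) ∈ (APprime ts).filter (· ≠ p) := by
      simp [APprime, Ne.symm hp0]
    exact sat_bigAnd.mp hall _ (List.mem_map.mpr ⟨0, h0mem, rfl⟩) hm

/-- From formula (1), fourth conjunct: `□ ⇔ ¬○` at reachable states. -/
lemma fact_sq_iff (h1 : StateSat G s0 (phi1 ts)) {s : G.State} (hre : Reach G s0 s) :
    (G.label s 6 ↔ ¬ G.label s 7) := by
  have hA : StateSat G s0 (Aq (glob (bigAnd [
      fIff psq (.neg pci),
      fImp psq (bigAnd ((APall ts).map fun p =>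
        fIff (Formula.Eq (.next (.atom p))) (D 1 (.next (.atom p))))),
      fImp pci (bigAnd ((APall ts).map fun p =>
        fIff (Formula.Eq (.next (.atom p))) (D 2 (.next (.atom p)))))]))) :=
    fun π hπ => sat_bigAnd.mp (by simpa [phi1] using h1 π hπ) _ (by simp)
  have hs := AG_transfer hA hre (runFrom_outcome (emptyCtx G) s)
  have := sat_bigAnd.mp hs _ (show fIff psq (.neg pci) ∈ _ by simp)
  exact sat_fIff.mp this

/-- From formula (2), first conjunct. -/
lemma fact_m_shape (h2 : StateSat G s0 (phi2 ts)) {s : G.State} (hre : Reach G s0 s)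
    (hm : G.label s 0) :
    (G.label s 6 ∧ ¬ G.label s 4 ∧ ¬ G.label s 5) ∨
      (G.label s 7 ∧ ¬ (G.label s 4 ∧ G.label s 5)) := by
  have hA : StateSat G s0 (Aq (glob (fImp pm (fOr (bigAnd [psq, .neg pal, .neg pbe])
      (.conj pci (.neg (.conj pal pbe))))))) :=
    fun π hπ => sat_bigAnd.mp (by simpa [phi2] using h2 π hπ) _ (by simp)
  have hs := AG_transfer hA hre (runFrom_outcome (emptyCtx G) s)
  have hd := sat_fOr.mp (sat_fImp.mp hs hm)
  rcases hd with h | h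
  · refine Or.inl ⟨?_, ?_, ?_⟩
    · exact sat_bigAnd.mp h _ (show psq ∈ _ by simp)
    · exact sat_bigAnd.mp h _ (show Formula.neg pal ∈ _ by simp)
    · exact sat_bigAnd.mp h _ (show Formula.neg pbe ∈ _ by simp)
  · exact Or.inr ⟨h.1, h.2⟩

/-- From formula (2), second conjunct. -/
lemma fact_v (h2 : StateSat G s0 (phi2 ts)) {s : G.State} (hre : Reach G s0 s) :
    ((G.label s 2 ∨ G.label s 3) → G.label s 0 ∧ G.label s 6) ∧
      (G.label s 0 → G.label s 6 → (G.label s 2 ↔ ¬ G.label s 3)) := by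
  have hA : StateSat G s0 (Aq (glob (.conj (fImp (.conj pm psq) (fIff pv1 (.neg pv2)))
      (fImp (fOr pv1 pv2) (.conj pm psq))))) :=
    fun π hπ => sat_bigAnd.mp (by simpa [phi2] using h2 π hπ) _ (by simp)
  have hs := AG_transfer hA hre (runFrom_outcome (emptyCtx G) s)
  constructor
  · intro hv
    exact sat_fImp.mp hs.2 (sat_fOr.mpr hv)
  · intro hm hsq
    exact sat_fIff.mp (sat_fImp.mp hs.1 ⟨hm, hsq⟩)

/-- From formula (2), third conjunct: shape of cells, and Player 1's colour choices. -/
lemma fact_cell (h2 : StateSat G s0 (phi2 ts)) {s : G.State} (hre : Reach G s0 s)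
    (hm : G.label s 0) (hsq : G.label s 6) :
    (∀ x, Step G s x → (G.label x 0 ∧ G.label x 7 ∧ (G.label x 4 ∨ G.label x 5)) ∧
      ∀ y, Step G x y →
        G.label y 0 ∧ G.label y 7 ∧ ¬ G.label y 4 ∧ ¬ G.label y 5) ∧
    (∃ σ, ∀ π', IsOutcome G (ctxOf G 1 σ) s π' → G.label (π' 1) 4) ∧
    (∃ σ, ∀ π', IsOutcome G (ctxOf G 1 σ) s π' → G.label (π' 1) 5) := by
  have hA : StateSat G s0 (Aq (glob (fImp (.conj pm psq) (bigAnd [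
      Aq (.next (bigAnd [pm, pci, fOr pal pbe,
        Aq (.next (bigAnd [pm, pci, .neg pal, .neg pbe]))])),
      D 1 (.next pal),
      D 1 (.next pbe)])))) :=
    fun π hπ => sat_bigAnd.mp (by simpa [phi2] using h2 π hπ) _ (by simp)
  have hs := sat_fImp.mp (AG_transfer hA hre (runFrom_outcome (emptyCtx G) s)) ⟨hm, hsq⟩
  refine ⟨?_, ?_, ?_⟩
  · intro x hx
    have h0 := sat_bigAnd.mp hs _ (show Aq (.next (bigAnd [pm, pci, fOr pal pbe,
        Aq (.next (bigAnd [pm, pci, .neg pal, .neg pbe]))])) ∈ _ by simp)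
    have hout := cons_run_outcome hx
    have hχ := sat_Aq.mp h0 _ hout
    -- hχ : sat of next (bigAnd ...) on consP s (runFrom ... x)
    have hlx0 : G.label x 0 := sat_bigAnd.mp hχ pm (by simp)
    have hlx7 : G.label x 7 := sat_bigAnd.mp hχ pci (by simp)
    have hlx45 : G.label x 4 ∨ G.label x 5 :=
      sat_fOr.mp (sat_bigAnd.mp hχ (fOr pal pbe) (by simp))
    refine ⟨⟨hlx0, hlx7, hlx45⟩, ?_⟩
    intro y hy
    have hin := sat_bigAnd.mp hχ (Aq (.next (bigAnd [pm, pci, .neg pal, .neg pbe])))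
      (by simp)
    have hout2 := cons_run_outcome hy
    have hχ2 := sat_Aq.mp hin _ hout2
    exact ⟨sat_bigAnd.mp hχ2 pm (by simp), sat_bigAnd.mp hχ2 pci (by simp),
      sat_bigAnd.mp hχ2 (.neg pal) (by simp), sat_bigAnd.mp hχ2 (.neg pbe) (by simp)⟩
  · exact sat_D_elim (sat_bigAnd.mp hs _ (show D 1 (.next pal) ∈ _ by simp))
  · exact sat_D_elim (sat_bigAnd.mp hs _ (show D 1 (.next pbe) ∈ _ by simp))

/-- From formula (3), second conjunct: exits have `v₁`- and `v₂`-successors. -/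
lemma fact_exit (h3 : StateSat G s0 (phi3 ts)) {s : G.State} (hre : Reach G s0 s)
    (hm : G.label s 0) (hci : G.label s 7) (ha : ¬ G.label s 4) (hb : ¬ G.label s 5) :
    (∃ z, Step G s z ∧ G.label z 2) ∧ (∃ z, Step G s z ∧ G.label z 3) := by
  have hA : StateSat G s0 (Aq (glob (fImp (bigAnd [pm, pci, .neg pal, .neg pbe])
      (bigAnd [Formula.Eq (.next pc), Formula.Eq (.next pv1), Formula.Eq (.next pv2),
        Aq (.next (bigOr [pc, pv1, pv2]))])))) :=
    fun π hπ => sat_bigAnd.mp (by simpa [phi3] using h3 π hπ) _ (by simp)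
  have hs0 := AG_transfer hA hre (runFrom_outcome (emptyCtx G) s)
  have hant : sat G (bigAnd [pm, pci, .neg pal, .neg pbe]) (emptyCtx G)
      (runFrom G (emptyCtx G) s) := by
    rw [sat_bigAnd]
    intro φ hφ
    simp only [List.mem_cons, List.not_mem_nil, or_false] at hφ
    rcases hφ with rfl | rfl | rfl | rfl
    exacts [hm, hci, ha, hb]
  have hs := sat_fImp.mp hs0 hant
  constructor
  · obtain ⟨π', ho, hv⟩ := sat_Eq.mp (sat_bigAnd.mp hs _
      (show Formula.Eq (.next pv1) ∈ _ by simp))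
    have hst := isOutcome_empty_steps ho 0
    rw [show π' 0 = s from ho.1] at hst
    exact ⟨π' 1, hst, hv⟩
  · obtain ⟨π', ho, hv⟩ := sat_Eq.mp (sat_bigAnd.mp hs _
      (show Formula.Eq (.next pv2) ∈ _ by simp))
    have hst := isOutcome_empty_steps ho 0
    rw [show π' 0 = s from ho.1] at hst
    exact ⟨π' 1, hst, hv⟩

/-- From formula (5). -/
lemma fact_five (h5 : StateSat G s0 phi5) {s : G.State} (hre : Reach G s0 s)
    (hm : G.label s 0) (hsq : G.label s 6) (σ : G.State → G.Move) :
    (∀ ρ, IsOutcome G (ctxOf G 2 σ) s ρ → G.label (ρ 3) 1 ∨ G.label (ρ 3) 2) ∨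
    (∀ ρ, IsOutcome G (ctxOf G 2 σ) s ρ → G.label (ρ 3) 1 ∨ G.label (ρ 3) 3) := by
  have hA : StateSat G s0 (Aq (glob (fImp (.conj pm psq)
      (B 2 (fOr (Aq (X3 (fOr pc pv1))) (Aq (X3 (fOr pc pv2)))))))) :=
    fun π hπ => by simpa [phi5] using h5 π hπ
  have hs := sat_fImp.mp (AG_transfer hA hre (runFrom_outcome (emptyCtx G) s)) ⟨hm, hsq⟩
  obtain ⟨π', hπ', hχ⟩ := sat_B_elim hs σ
  have hπ'0 : π' 0 = s := hπ'.1
  rcases sat_fOr.mp hχ with h | h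
  · left
    intro ρ hρ
    have := sat_Aq.mp h ρ (by rw [hπ'0]; exact hρ)
    exact sat_fOr.mp this
  · right
    intro ρ hρ
    have := sat_Aq.mp h ρ (by rw [hπ'0]; exact hρ)
    exact sat_fOr.mp this

end Facts


/-! #### The main combinatorial argument -/

section Main

variable {ts : TileSystem} {s0 : G.State}

/-- A reachable middle state (labelled `m` and `○`) is not both `α` and `β`. -/
lemma fact_middle_not_both (h1 : StateSat G s0 (phi1 ts)) (h2 : StateSat G s0 (phi2 ts))
    {x : G.State} (hre : Reach G s0 x) (hm : G.label x 0) (hci : G.label x 7) :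
    ¬ (G.label x 4 ∧ G.label x 5) := by
  rcases fact_m_shape h2 hre hm with ⟨h6, -, -⟩ | ⟨-, h⟩
  · exact absurd hci ((fact_sq_iff h1 hre).mp h6)
  · exact h

/-- Player 2 does not control a reachable entry state. -/
lemma fact_notC2 (h1 : StateSat G s0 (phi1 ts)) (h2 : StateSat G s0 (phi2 ts))
    {s : G.State} (hre : Reach G s0 s) (hm : G.label s 0) (hsq : G.label s 6) :
    ¬ Controls G 2 s := by
  intro hc
  obtain ⟨hsucc, ⟨σa, Ha⟩, ⟨σb, Hb⟩⟩ := fact_cell h2 hre hm hsq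
  classical
  set mvb := selOf G (ctxOf G 1 σb) s with hmvb
  set x := G.trans s mvb with hx
  have hxβ : G.label x 5 := Hb _ (runFrom_outcome (ctxOf G 1 σb) s)
  set mva := Function.update mvb 1 (σa s) with hmva
  have hcompa : ∀ p τ, ctxOf G 1 σa p = some τ → mva p = τ s := by
    intro p τ h
    by_cases hp : p = 1
    · subst hp
      have hτ : σa = τ := by simpa [ctxOf] using h
      subst hτ
      exact Function.update_self 1 (σa s) mvb
    · simp [ctxOf, hp] at h
  have hout : IsOutcome G (ctxOf G 1 σa) s
      (consP s (runFrom G (ctxOf G 1 σa) (G.trans s mva))) :=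
    cons_outcome mva hcompa rfl (runFrom_outcome _ _)
  have hxα0 : G.label (G.trans s mva) 4 := Ha _ hout
  have htreq : G.trans s mva = x := hc mva mvb (Function.update_of_ne (by norm_num) _ _)
  rw [htreq] at hxα0
  have hstep : Step G s x := ⟨mvb, rfl⟩
  have hrx : Reach G s0 x := Relation.ReflTransGen.tail hre hstep
  obtain ⟨⟨hx0, hx7, -⟩, -⟩ := hsucc x hstep
  exact fact_middle_not_both h1 h2 hrx hx0 hx7 ⟨hxα0, hxβ⟩

/-- The core argument: two routes through distinct middles to distinct exits
contradict formula (5). -/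
lemma core (hTB : TurnBased G)
    (h1 : StateSat G s0 (phi1 ts)) (h2 : StateSat G s0 (phi2 ts))
    (h3 : StateSat G s0 (phi3 ts)) (h5 : StateSat G s0 phi5)
    {s a₁ b₁ a₂ b₂ : G.State} (hre : Reach G s0 s)
    (hm : G.label s 0) (hsq : G.label s 6)
    (ha₁ : Step G s a₁) (hb₁ : Step G a₁ b₁) (ha₂ : Step G s a₂) (hb₂ : Step G a₂ b₂)
    (haa : a₁ ≠ a₂) (hbb : b₁ ≠ b₂) : False := by
  classical
  obtain ⟨hsucc, -, -⟩ := fact_cell h2 hre hm hsq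
  obtain ⟨⟨hA10, hA17, hA145⟩, hA1exit⟩ := hsucc a₁ ha₁
  obtain ⟨⟨hA20, hA27, hA245⟩, hA2exit⟩ := hsucc a₂ ha₂
  obtain ⟨hB10, hB17, hB14, hB15⟩ := hA1exit b₁ hb₁
  obtain ⟨hB20, hB27, hB24, hB25⟩ := hA2exit b₂ hb₂
  have ra₁ : Reach G s0 a₁ := Relation.ReflTransGen.tail hre ha₁
  have ra₂ : Reach G s0 a₂ := Relation.ReflTransGen.tail hre ha₂
  have rb₁ : Reach G s0 b₁ := Relation.ReflTransGen.tail ra₁ hb₁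
  have rb₂ : Reach G s0 b₂ := Relation.ReflTransGen.tail ra₂ hb₂
  obtain ⟨-, z₁, hsz₁, hz₁⟩ := fact_exit h3 rb₁ hB10 hB17 hB14 hB15
  obtain ⟨⟨z₂, hsz₂, hz₂⟩, -⟩ := fact_exit h3 rb₂ hB20 hB27 hB24 hB25
  have rz₁ : Reach G s0 z₁ := Relation.ReflTransGen.tail rb₁ hsz₁
  have rz₂ : Reach G s0 z₂ := Relation.ReflTransGen.tail rb₂ hsz₂
  obtain ⟨w₁, hw₁⟩ := hb₁
  obtain ⟨w₂, hw₂⟩ := hb₂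
  obtain ⟨u₁, hu₁⟩ := hsz₁
  obtain ⟨u₂, hu₂⟩ := hsz₂
  -- distinctness of the four route states
  have hb₁a₁ : b₁ ≠ a₁ := by
    rintro rfl; rcases hA145 with h | h; exacts [hB14 h, hB15 h]
  have hb₁a₂ : b₁ ≠ a₂ := by
    rintro rfl; rcases hA245 with h | h; exacts [hB14 h, hB15 h]
  have hb₂a₁ : b₂ ≠ a₁ := by
    rintro rfl; rcases hA145 with h | h; exacts [hB24 h, hB25 h]
  have hb₂a₂ : b₂ ≠ a₂ := by
    rintro rfl; rcases hA245 with h | h; exacts [hB24 h, hB25 h]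
  -- the strategy for Player 2
  set σ : G.State → G.Move := fun t =>
    if t = a₁ then w₁ 2 else if t = a₂ then w₂ 2 else
    if t = b₁ then u₁ 2 else if t = b₂ then u₂ 2 else dmvG G 2 with hσdef
  have hσa₁ : σ a₁ = w₁ 2 := by rw [hσdef]; simp
  have hσa₂ : σ a₂ = w₂ 2 := by rw [hσdef]; simp [Ne.symm haa]
  have hσb₁ : σ b₁ = u₁ 2 := by rw [hσdef]; simp [hb₁a₁, hb₁a₂]
  have hσb₂ : σ b₂ = u₂ 2 := by
    rw [hσdef]; simp [hb₂a₁, hb₂a₂, Ne.symm hbb]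
  have hcomp : ∀ (u : G.State) (mv : ℕ → G.Move), mv 2 = σ u →
      ∀ p τ, ctxOf G 2 σ p = some τ → mv p = τ u := by
    intro u mv hmv p τ h
    by_cases hp : p = 2
    · subst hp
      have hτ : σ = τ := by simpa [ctxOf] using h
      subst hτ
      exact hmv
    · simp [ctxOf, hp] at h
  -- Player 2 does not control s, so the first step can be made compliant
  have hnc2 : ¬ Controls G 2 s := fact_notC2 h1 h2 hre hm hsq
  obtain ⟨ps, hps⟩ := hTB s
  have hps2 : ps ≠ 2 := by rintro rfl; exact hnc2 hps
  have hfirst : ∀ {a : G.State}, Step G s a →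
      ∃ mv : ℕ → G.Move, mv 2 = σ s ∧ G.trans s mv = a := by
    rintro a ⟨v, hv⟩
    refine ⟨Function.update v 2 (σ s), Function.update_self 2 (σ s) v, ?_⟩
    rw [hps v (Function.update v 2 (σ s)) (Function.update_of_ne hps2 _ _).symm] at hv
    exact hv
  obtain ⟨mv₁, hmv₁, htr₁⟩ := hfirst ha₁
  obtain ⟨mv₂, hmv₂, htr₂⟩ := hfirst ha₂
  -- the two compliant outcomes
  set ctx := ctxOf G 2 σ with hctx
  have hπ₁ : IsOutcome G ctx s (consP s (consP a₁ (consP b₁ (runFrom G ctx z₁)))) :=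
    cons_outcome mv₁ (hcomp s mv₁ hmv₁) htr₁
      (cons_outcome w₁ (hcomp a₁ w₁ hσa₁.symm) hw₁
        (cons_outcome u₁ (hcomp b₁ u₁ hσb₁.symm) hu₁ (runFrom_outcome ctx z₁)))
  have hπ₂ : IsOutcome G ctx s (consP s (consP a₂ (consP b₂ (runFrom G ctx z₂)))) :=
    cons_outcome mv₂ (hcomp s mv₂ hmv₂) htr₂
      (cons_outcome w₂ (hcomp a₂ w₂ hσa₂.symm) hw₂
        (cons_outcome u₂ (hcomp b₂ u₂ hσb₂.symm) hu₂ (runFrom_outcome ctx z₂)))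
  -- labels of z₁ (a v₂-state) and z₂ (a v₁-state)
  have hz₁msq : G.label z₁ 0 ∧ G.label z₁ 6 := (fact_v h2 rz₁).1 (Or.inr hz₁)
  have hz₂msq : G.label z₂ 0 ∧ G.label z₂ 6 := (fact_v h2 rz₂).1 (Or.inl hz₂)
  have hz₁notc : ¬ G.label z₁ 1 := fact_m_not_c h1 rz₁ hz₁msq.1
  have hz₂notc : ¬ G.label z₂ 1 := fact_m_not_c h1 rz₂ hz₂msq.1
  have hz₁notv1 : ¬ G.label z₁ 2 := fun h =>
    ((fact_v h2 rz₁).2 hz₁msq.1 hz₁msq.2).mp h hz₁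
  have hz₂notv2 : ¬ G.label z₂ 3 :=
    ((fact_v h2 rz₂).2 hz₂msq.1 hz₂msq.2).mp hz₂
  rcases fact_five h5 hre hm hsq σ with h | h
  · rcases h _ hπ₁ with hc | hv
    · exact hz₁notc hc
    · exact hz₁notv1 hv
  · rcases h _ hπ₂ with hc | hv
    · exact hz₂notc hc
    · exact hz₂notv2 hv

/-- Any two two-step successors of a reachable entry state coincide. -/
lemma pairwise_eq (hTB : TurnBased G)
    (h1 : StateSat G s0 (phi1 ts)) (h2 : StateSat G s0 (phi2 ts))
    (h3 : StateSat G s0 (phi3 ts)) (h5 : StateSat G s0 phi5)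
    {s x₁ y₁ x₂ y₂ : G.State} (hre : Reach G s0 s)
    (hm : G.label s 0) (hsq : G.label s 6)
    (hx₁ : Step G s x₁) (hy₁ : Step G x₁ y₁) (hx₂ : Step G s x₂) (hy₂ : Step G x₂ y₂) :
    y₁ = y₂ := by
  classical
  by_contra hne
  by_cases hxx : x₁ = x₂
  · subst hxx
    -- both routes go through the same middle; use a second middle of a different colour
    obtain ⟨hsucc, ⟨σa, Ha⟩, ⟨σb, Hb⟩⟩ := fact_cell h2 hre hm hsq
    set xα := runFrom G (ctxOf G 1 σa) s 1 with hxαdef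
    set xβ := runFrom G (ctxOf G 1 σb) s 1 with hxβdef
    have hstepα : Step G s xα := ⟨selOf G (ctxOf G 1 σa) s, rfl⟩
    have hstepβ : Step G s xβ := ⟨selOf G (ctxOf G 1 σb) s, rfl⟩
    have hlα : G.label xα 4 := Ha _ (runFrom_outcome _ s)
    have hlβ : G.label xβ 5 := Hb _ (runFrom_outcome _ s)
    have hαβ : xα ≠ xβ := by
      rintro h
      obtain ⟨⟨h0, h7, -⟩, -⟩ := hsucc xβ hstepβ
      exact fact_middle_not_both h1 h2 (Relation.ReflTransGen.tail hre hstepβ) h0 h7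
        ⟨h ▸ hlα, hlβ⟩
    obtain ⟨x', hstep', hx'ne⟩ : ∃ x', Step G s x' ∧ x₁ ≠ x' := by
      by_cases hxa : x₁ = xα
      · exact ⟨xβ, hstepβ, fun h => hαβ (hxa ▸ h)⟩
      · exact ⟨xα, hstepα, hxa⟩
    have hy' : Step G x' (G.trans x' (dmvG G)) := ⟨dmvG G, rfl⟩
    by_cases hyy : G.trans x' (dmvG G) = y₁
    · exact core hTB h1 h2 h3 h5 hre hm hsq hx₁ hy₂ hstep' hy' hx'ne
        (by rw [hyy]; exact Ne.symm hne)
    · exact core hTB h1 h2 h3 h5 hre hm hsq hx₁ hy₁ hstep' hy' hx'ne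
        (fun h => hyy h.symm)
  · exact core hTB h1 h2 h3 h5 hre hm hsq hx₁ hy₁ hx₂ hy₂ hxx hne

end Main

end AuxProof

/-- **Theorem.** In any turn-based game structure satisfying formulas (1)–(4) of the
reduction, the additional formula (5), `AG[(m ∧ □) ⇒ [2](⟨∅⟩X³(c ∨ v₁) ∨ ⟨∅⟩X³(c ∨ v₂))]`,
forces every cell gadget to have a single exit state: from the entry state of each
cell (a reachable state labelled `m` and `□`), the `α`-middle state and the `β`-middle
state lead to the same exit state. -/
theorem formula5_forces_unique_exit (ts : TileSystem) (G : CGS) (s0 : G.State)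
    (hTB : TurnBased G)
    (h1 : StateSat G s0 (phi1 ts)) (h2 : StateSat G s0 (phi2 ts))
    (h3 : StateSat G s0 (phi3 ts)) (h4 : StateSat G s0 (phi4 ts))
    (h5 : StateSat G s0 phi5) :
    ∀ s, Reach G s0 s → G.label s 0 → G.label s 6 →
      ∃ e : G.State, ∀ x, Step G s x → ∀ y, Step G x y → y = e := by
  intro s hre hm hsq
  refine ⟨G.trans (G.trans s (dmvG G)) (dmvG G), ?_⟩
  intro x hx y hy
  exact pairwise_eq hTB h1 h2 h3 h5 hre hm hsq hx hy ⟨dmvG G, rfl⟩ ⟨dmvG G, rfl⟩
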